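/- Let n ≥ 2 and let x, y : {1,…,n} → {0,1}. In the graph D(x,y): if there exists an index i with x_i = y_i = 1, then there exist two vertices at distance at least 8 (the diameter of D(x,y) is at least 8); if there is no such index, then every two vertices of D(x,y) are at distance at most 7. -/
import Mathlib


/-- Vertices of the `Diamond` construction: `a`, `b`, `c j` for `j ∈ {0, …, n}`
(encoded as `Fin (n+1)`), and `p i j` for `i ∈ {1, …, n}` (encoded as `Fin n`)
and `j ∈ {1, …, 9}` (encoded as `Fin 9`). -/
inductive DVert (n : ℕ) : Type
  | a : DVert n
  | b : DVert n
  | c : Fin (n + 1) → DVert n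
  | p : Fin n → Fin 9 → DVert n

/-- Edges of `D(x, y)`: `a ~ b`; `a ~ c j` and `b ~ c j` for all `j`;
path edges `p i j ~ p i (j+1)`; `c_{i-1} ~ p_{i,1}` and `p_{i,9} ~ c_i`;
`a ~ p_{i,2}` and `a ~ p_{i,6}` iff `x i = 0`;
`b ~ p_{i,4}` and `b ~ p_{i,8}` iff `y i = 0`; no other edges. -/
def dRel {n : ℕ} (x y : Fin n → Fin 2) : DVert n → DVert n → Prop
  | .a, .b => True
  | .a, .c _ => True
  | .b, .c _ => True
  | .p i j, .p k l => i = k ∧ (l : ℕ) = (j : ℕ) + 1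
  | .c j, .p i l => (j = i.castSucc ∧ l = 0) ∨ (j = i.succ ∧ l = 8)
  | .a, .p i j => (j = 1 ∨ j = 5) ∧ x i = 0
  | .b, .p i j => (j = 3 ∨ j = 7) ∧ y i = 0
  | _, _ => False

/-- The `Diamond` graph. -/
def DGraph {n : ℕ} (x y : Fin n → Fin 2) : SimpleGraph (DVert n) :=
  SimpleGraph.fromRel (dRel x y)

/-- potential function for the lower bound -/
def dF {n : ℕ} (i : Fin n) : DVert n → ℕ
  | .a => 6
  | .b => 6
  | .c _ => 5
  | .p m j => if m = i then ![4,3,2,1,0,1,2,3,4] j else ![6,7,8,7,8,7,8,7,6] j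

lemma dRel_lip {n : ℕ} {x y : Fin n → Fin 2} {i : Fin n}
    (hx : x i = 1) (hy : y i = 1) (u v : DVert n) (h : dRel x y u v) :
    dF i v ≤ dF i u + 1 ∧ dF i u ≤ dF i v + 1 := by
  cases u with
  | a =>
    cases v with
    | a => exact h.elim
    | b => refine ⟨?_, ?_⟩ <;> first | decide | norm_num [dF]
    | c j => refine ⟨?_, ?_⟩ <;> first | decide | norm_num [dF]
    | p m j =>
      obtain ⟨hj, hxm⟩ := h
      have hmi : m ≠ i := by rintro rfl; rw [hx] at hxm; exact absurd hxm (by decide)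
      simp only [dF, if_neg hmi]
      rcases hj with rfl | rfl <;> refine ⟨?_, ?_⟩ <;> first | decide | norm_num [dF]
  | b =>
    cases v with
    | a => exact h.elim
    | b => exact h.elim
    | c j => refine ⟨?_, ?_⟩ <;> first | decide | norm_num [dF]
    | p m j =>
      obtain ⟨hj, hym⟩ := h
      have hmi : m ≠ i := by rintro rfl; rw [hy] at hym; exact absurd hym (by decide)
      simp only [dF, if_neg hmi]
      rcases hj with rfl | rfl <;> refine ⟨?_, ?_⟩ <;> first | decide | norm_num [dF]
  | c j =>
    cases v with
    | a => exact h.elim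
    | b => exact h.elim
    | c _ => exact h.elim
    | p m l =>
      have : dF i (DVert.c j) = 5 := rfl
      rw [this]
      rcases h with ⟨-, rfl⟩ | ⟨-, rfl⟩ <;>
        · simp only [dF]
          by_cases hm : m = i <;> simp only [if_pos, if_neg, hm, if_true, if_false] <;>
            refine ⟨?_, ?_⟩ <;> first | decide | norm_num [dF]
  | p m j =>
    cases v with
    | a => exact h.elim
    | b => exact h.elim
    | c _ => exact h.elim
    | p k l =>
      obtain ⟨rfl, hl⟩ := h
      simp only [dF]
      by_cases hm : m = i <;>
        simp only [if_pos, if_neg, hm, if_true, if_false] <;>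
        fin_cases j <;> fin_cases l <;>
        first
          | (exfalso; revert hl; decide)
          | refine ⟨?_, ?_⟩ <;> first | decide | norm_num [dF]

namespace DAux
open SimpleGraph Walk
variable {n : ℕ} {x y : Fin n → Fin 2}

lemma hab : (DGraph x y).Adj .a .b := by
  simp [DGraph, SimpleGraph.fromRel_adj, dRel]

lemma hac (j : Fin (n+1)) : (DGraph x y).Adj .a (.c j) := by
  simp [DGraph, SimpleGraph.fromRel_adj, dRel]

lemma hbc (j : Fin (n+1)) : (DGraph x y).Adj .b (.c j) := by
  simp [DGraph, SimpleGraph.fromRel_adj, dRel]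

lemma hpp (m : Fin n) (j l : Fin 9) (h : (l : ℕ) = (j : ℕ) + 1) :
    (DGraph x y).Adj (.p m j) (.p m l) := by
  constructor
  · intro he
    injection he with h1 h2
    subst h2; omega
  · exact Or.inl ⟨rfl, h⟩

lemma hcp0 (m : Fin n) : (DGraph x y).Adj (.c m.castSucc) (.p m 0) := by
  refine ⟨by simp, Or.inl (Or.inl ⟨rfl, rfl⟩)⟩

lemma hcp8 (m : Fin n) : (DGraph x y).Adj (.c m.succ) (.p m 8) := by
  refine ⟨by simp, Or.inl (Or.inr ⟨rfl, rfl⟩)⟩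

lemma hap (m : Fin n) (j : Fin 9) (hj : j = 1 ∨ j = 5) (hx : x m = 0) :
    (DGraph x y).Adj .a (.p m j) := by
  refine ⟨by simp, Or.inl ⟨hj, hx⟩⟩

lemma hbp (m : Fin n) (j : Fin 9) (hj : j = 3 ∨ j = 7) (hy : y m = 0) :
    (DGraph x y).Adj .b (.p m j) := by
  refine ⟨by simp, Or.inl ⟨hj, hy⟩⟩

lemma walk_lb {V : Type*} {G : SimpleGraph V} (f : V → ℕ)
    (hf : ∀ u v, G.Adj u v → f v ≤ f u + 1) {u v : V} (W : G.Walk u v) :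
    f v ≤ f u + W.length := by
  induction W with
  | nil => simp
  | cons h W ih =>
    rename_i a b c
    have := hf a b h
    simp only [Walk.length_cons]
    omega

lemma near (hxy : ∀ m, x m = 0 ∨ y m = 0) (u : DVert n) :
    ∃ z : DVert n, ∃ W : (DGraph x y).Walk u z,
      (z = DVert.a ∨ z = DVert.b) ∧ W.length ≤ 3 := by
  cases u with
  | a => exact ⟨_, .nil, Or.inl rfl, by simp⟩
  | b => exact ⟨_, .nil, Or.inr rfl, by simp⟩
  | c j => exact ⟨_, .cons (hac j).symm .nil, Or.inl rfl, by simp⟩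
  | p m j =>
    rcases hxy m with hx | hy
    · fin_cases j
      · exact ⟨_, .cons (hcp0 m).symm (.cons (hac _).symm .nil), Or.inl rfl, by simp⟩
      · exact ⟨_, .cons (hap m 1 (Or.inl rfl) hx).symm .nil, Or.inl rfl, by simp⟩
      · exact ⟨_, .cons (hpp m 1 2 (by decide)).symm
          (.cons (hap m 1 (Or.inl rfl) hx).symm .nil), Or.inl rfl, by simp⟩
      · exact ⟨_, .cons (hpp m 2 3 (by decide)).symm (.cons (hpp m 1 2 (by decide)).symm
          (.cons (hap m 1 (Or.inl rfl) hx).symm .nil)), Or.inl rfl, by simp⟩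
      · exact ⟨_, .cons (hpp m 4 5 (by decide))
          (.cons (hap m 5 (Or.inr rfl) hx).symm .nil), Or.inl rfl, by simp⟩
      · exact ⟨_, .cons (hap m 5 (Or.inr rfl) hx).symm .nil, Or.inl rfl, by simp⟩
      · exact ⟨_, .cons (hpp m 5 6 (by decide)).symm
          (.cons (hap m 5 (Or.inr rfl) hx).symm .nil), Or.inl rfl, by simp⟩
      · exact ⟨_, .cons (hpp m 6 7 (by decide)).symm (.cons (hpp m 5 6 (by decide)).symm
          (.cons (hap m 5 (Or.inr rfl) hx).symm .nil)), Or.inl rfl, by simp⟩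
      · exact ⟨_, .cons (hcp8 m).symm (.cons (hac _).symm .nil), Or.inl rfl, by simp⟩
    · fin_cases j
      · exact ⟨_, .cons (hcp0 m).symm (.cons (hbc _).symm .nil), Or.inr rfl, by simp⟩
      · exact ⟨_, .cons (hpp m 1 2 (by decide)) (.cons (hpp m 2 3 (by decide))
          (.cons (hbp m 3 (Or.inl rfl) hy).symm .nil)), Or.inr rfl, by simp⟩
      · exact ⟨_, .cons (hpp m 2 3 (by decide))
          (.cons (hbp m 3 (Or.inl rfl) hy).symm .nil), Or.inr rfl, by simp⟩
      · exact ⟨_, .cons (hbp m 3 (Or.inl rfl) hy).symm .nil, Or.inr rfl, by simp⟩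
      · exact ⟨_, .cons (hpp m 3 4 (by decide)).symm
          (.cons (hbp m 3 (Or.inl rfl) hy).symm .nil), Or.inr rfl, by simp⟩
      · exact ⟨_, .cons (hpp m 5 6 (by decide)) (.cons (hpp m 6 7 (by decide))
          (.cons (hbp m 7 (Or.inr rfl) hy).symm .nil)), Or.inr rfl, by simp⟩
      · exact ⟨_, .cons (hpp m 6 7 (by decide))
          (.cons (hbp m 7 (Or.inr rfl) hy).symm .nil), Or.inr rfl, by simp⟩
      · exact ⟨_, .cons (hbp m 7 (Or.inr rfl) hy).symm .nil, Or.inr rfl, by simp⟩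
      · exact ⟨_, .cons (hcp8 m).symm (.cons (hbc _).symm .nil), Or.inr rfl, by simp⟩
end DAux

theorem stmt_9 {n : ℕ} (hn : 2 ≤ n) (x y : Fin n → Fin 2) :
    ((∃ i, x i = 1 ∧ y i = 1) →
      ∃ u w : DVert n, 8 ≤ (DGraph x y).dist u w) ∧
    ((¬ ∃ i, x i = 1 ∧ y i = 1) →
      ∀ u w : DVert n, (DGraph x y).dist u w ≤ 7) := by
  constructor
  · rintro ⟨i, hx, hy⟩
    have h1n : 1 < n := hn
    set k : Fin n := if (i : ℕ) = 0 then ⟨1, by omega⟩ else ⟨0, by omega⟩ with hk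
    have hki : k ≠ i := by
      have : (k : ℕ) ≠ (i : ℕ) := by
        simp only [hk]; split_ifs with h <;> simp [h]
        omega
      exact fun e => this (by rw [e])
    refine ⟨DVert.p i 4, DVert.p k 4, ?_⟩
    have hreach : (DGraph x y).Reachable (DVert.p i 4) (DVert.p k 4) :=
      ⟨.cons (DAux.hpp i 4 5 (by decide)) (.cons (DAux.hpp i 5 6 (by decide))
        (.cons (DAux.hpp i 6 7 (by decide)) (.cons (DAux.hpp i 7 8 (by decide))
        (.cons (DAux.hcp8 i).symm (.cons (DAux.hac i.succ).symm
        (.cons (DAux.hac k.castSucc) (.cons (DAux.hcp0 k)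
        (.cons (DAux.hpp k 0 1 (by decide)) (.cons (DAux.hpp k 1 2 (by decide))
        (.cons (DAux.hpp k 2 3 (by decide)) (.cons (DAux.hpp k 3 4 (by decide)) .nil)))))))))))⟩
    obtain ⟨W, hW⟩ := hreach.exists_walk_length_eq_dist
    have hf : ∀ u v, (DGraph x y).Adj u v → dF i v ≤ dF i u + 1 := by
      rintro u v ⟨hne, h | h⟩
      · exact (dRel_lip hx hy u v h).1
      · exact (dRel_lip hx hy v u h).2
    have hlb := DAux.walk_lb (dF i) hf W
    rw [hW] at hlb
    have h1 : dF i (DVert.p i 4) = 0 := by simp [dF]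
    have h2 : dF i (DVert.p k 4) = 8 := by simp [dF, hki]
    omega
  · rintro hne u w
    have hxy : ∀ m, x m = 0 ∨ y m = 0 := by
      intro m
      by_contra hc
      push_neg at hc
      obtain ⟨h1, h2⟩ := hc
      exact hne ⟨m, by omega, by omega⟩
    obtain ⟨zu, Wu, hzu, hWu⟩ := DAux.near hxy u
    obtain ⟨zw, Ww, hzw, hWw⟩ := DAux.near hxy w
    have hM : ∃ M : (DGraph x y).Walk zu zw, M.length ≤ 1 := by
      rcases hzu with rfl | rfl <;> rcases hzw with rfl | rfl
      · exact ⟨.nil, by simp⟩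
      · exact ⟨.cons DAux.hab .nil, by simp⟩
      · exact ⟨.cons DAux.hab.symm .nil, by simp⟩
      · exact ⟨.nil, by simp⟩
    obtain ⟨M, hM⟩ := hM
    have hd := SimpleGraph.dist_le (Wu.append (M.append Ww.reverse))
    simp only [SimpleGraph.Walk.length_append, SimpleGraph.Walk.length_reverse] at hd
    omega
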